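/- arXiv:2408.14551 — 3 statements merged into one kernel-verified Lean document; each statement's English description precedes it below -/
import Mathlib

section
/- For the Carlos gamma scale, (a,b) = (9,11), the unit x₀ = (1/602)·log₂((6/5)⁹·(5/4)¹¹·(3/2)²⁰) satisfies |1200·9·x₀ - 1200·log₂(6/5)| < 1/2, |1200·11·x₀ - 1200·log₂(5/4)| < 1/2, and |1200·20·x₀ - 1200·log₂(3/2)| < 1/2. -/
open Real

private lemma nat1a : (5:ℕ)^744000 < 2^1079101 * 3^409200 := by decide +kernel
private lemma nat1b : (2:ℕ)^1078499 * 3^409200 < 5^744000 := by decide +kernel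
private lemma nat2a : (2:ℕ)^1008899 * 3^382800 < 5^696000 := by decide +kernel
private lemma nat2b : (5:ℕ)^696000 < 2^1009501 * 3^382800 := by decide +kernel
private lemma nat3a : (5:ℕ)^48000 < 2^69901 * 3^26400 := by decide +kernel
private lemma nat3b : (2:ℕ)^69299 * 3^26400 < 5^48000 := by decide +kernel

private lemma logcomb {p q r s t u : ℕ} (h : (2:ℕ)^p * 3^q * 5^r < 2^s * 3^t * 5^u) :
    (p:ℝ) * Real.log 2 + q * Real.log 3 + r * Real.log 5 <
    s * Real.log 2 + t * Real.log 3 + u * Real.log 5 := by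
  have h2 : (0:ℝ) < 2 := by norm_num
  have h3 : (0:ℝ) < 3 := by norm_num
  have h5 : (0:ℝ) < 5 := by norm_num
  have hR : ((2:ℝ))^p * 3^q * 5^r < 2^s * 3^t * 5^u := by exact_mod_cast h
  have := Real.log_lt_log (by positivity) hR
  rw [Real.log_mul (by positivity) (by positivity),
      Real.log_mul (by positivity) (by positivity),
      Real.log_mul (by positivity) (by positivity),
      Real.log_mul (by positivity) (by positivity),
      Real.log_pow, Real.log_pow, Real.log_pow, Real.log_pow, Real.log_pow,
      Real.log_pow] at this
  exact_mod_cast this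

private lemma r1a : 744000 * Real.log 5 < 1079101 * Real.log 2 + 409200 * Real.log 3 := by
  have := logcomb (p := 0) (q := 0) (r := 744000) (s := 1079101) (t := 409200) (u := 0)
    (by simpa using nat1a)
  simpa using this

private lemma r1b : 1078499 * Real.log 2 + 409200 * Real.log 3 < 744000 * Real.log 5 := by
  have := logcomb (p := 1078499) (q := 409200) (r := 0) (s := 0) (t := 0) (u := 744000)
    (by simpa using nat1b)
  simpa using this

private lemma r2a : 1008899 * Real.log 2 + 382800 * Real.log 3 < 696000 * Real.log 5 := by
  have := logcomb (p := 1008899) (q := 382800) (r := 0) (s := 0) (t := 0) (u := 696000)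
    (by simpa using nat2a)
  simpa using this

private lemma r2b : 696000 * Real.log 5 < 1009501 * Real.log 2 + 382800 * Real.log 3 := by
  have := logcomb (p := 0) (q := 0) (r := 696000) (s := 1009501) (t := 382800) (u := 0)
    (by simpa using nat2b)
  simpa using this

private lemma r3a : 48000 * Real.log 5 < 69901 * Real.log 2 + 26400 * Real.log 3 := by
  have := logcomb (p := 0) (q := 0) (r := 48000) (s := 69901) (t := 26400) (u := 0)
    (by simpa using nat3a)
  simpa using this

private lemma r3b : 69299 * Real.log 2 + 26400 * Real.log 3 < 48000 * Real.log 5 := by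
  have := logcomb (p := 69299) (q := 26400) (r := 0) (s := 0) (t := 0) (u := 48000)
    (by simpa using nat3b)
  simpa using this

theorem stmt8 (x₀ : ℝ)
    (hx₀ : x₀ = (1/602 : ℝ) * logb 2 (((6:ℝ)/5)^9 * ((5:ℝ)/4)^11 * ((3:ℝ)/2)^20)) :
    |1200 * 9 * x₀ - 1200 * logb 2 (6/5)| < 1/2
    ∧ |1200 * 11 * x₀ - 1200 * logb 2 (5/4)| < 1/2
    ∧ |1200 * 20 * x₀ - 1200 * logb 2 (3/2)| < 1/2 := by
  have l2pos : 0 < Real.log 2 := Real.log_pos (by norm_num)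
  have l2ne : Real.log 2 ≠ 0 := l2pos.ne'
  have h65 : Real.log ((6:ℝ)/5) = Real.log 2 + Real.log 3 - Real.log 5 := by
    rw [show (6:ℝ)/5 = 2*3/5 by norm_num, Real.log_div (by norm_num) (by norm_num),
        Real.log_mul (by norm_num) (by norm_num)]
  have h54 : Real.log ((5:ℝ)/4) = Real.log 5 - 2 * Real.log 2 := by
    rw [show (5:ℝ)/4 = 5/2^2 by norm_num, Real.log_div (by norm_num) (by norm_num),
        Real.log_pow]
    push_cast; ring
  have h32 : Real.log ((3:ℝ)/2) = Real.log 3 - Real.log 2 := by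
    rw [Real.log_div (by norm_num) (by norm_num)]
  have hbig : Real.log (((6:ℝ)/5)^9 * ((5:ℝ)/4)^11 * ((3:ℝ)/2)^20)
      = 9 * Real.log ((6:ℝ)/5) + 11 * Real.log ((5:ℝ)/4) + 20 * Real.log ((3:ℝ)/2) := by
    rw [Real.log_mul (by positivity) (by positivity),
        Real.log_mul (by positivity) (by positivity),
        Real.log_pow, Real.log_pow, Real.log_pow]
    push_cast; ring
  have habs : ∀ D : ℝ, -(301 * Real.log 2) < D → D < 301 * Real.log 2 →
      |D / (602 * Real.log 2)| < 1/2 := by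
    intro D h1 h2
    rw [abs_div, abs_of_pos (by positivity : (0:ℝ) < 602 * Real.log 2),
        div_lt_iff₀ (by positivity)]
    rw [abs_lt]
    constructor <;> nlinarith
  refine ⟨?_, ?_, ?_⟩
  · have hE : 1200 * 9 * x₀ - 1200 * logb 2 (6/5)
        = (744000 * Real.log 5 - 1078800 * Real.log 2 - 409200 * Real.log 3)
          / (602 * Real.log 2) := by
      rw [hx₀]
      simp only [Real.logb, hbig, h65, h54, h32]
      field_simp
      ring
    rw [hE]
    exact habs _ (by nlinarith [r1b]) (by nlinarith [r1a])
  · have hE : 1200 * 11 * x₀ - 1200 * logb 2 (5/4)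
        = (1009200 * Real.log 2 + 382800 * Real.log 3 - 696000 * Real.log 5)
          / (602 * Real.log 2) := by
      rw [hx₀]
      simp only [Real.logb, hbig, h65, h54, h32]
      field_simp
      ring
    rw [hE]
    exact habs _ (by nlinarith [r2b]) (by nlinarith [r2a])
  · have hE : 1200 * 20 * x₀ - 1200 * logb 2 (3/2)
        = (48000 * Real.log 5 - 69600 * Real.log 2 - 26400 * Real.log 3)
          / (602 * Real.log 2) := by
      rw [hx₀]
      simp only [Real.logb, hbig, h65, h54, h32]
      field_simp
      ring
    rw [hE]
    exact habs _ (by nlinarith [r3b]) (by nlinarith [r3a])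
end

section
/- In the (17,21)-Carlos scale with unit x₀ = (1/2174)·log₂((6/5)¹⁷·(5/4)²¹·(3/2)³⁸), 65 units exceed an octave by less than 0.6 cents: 0 < 1200·65·x₀ - 1200 < 0.6. -/
open Real

theorem stmt13 (x₀ : ℝ)
    (hx₀ : x₀ = (1/2174 : ℝ) * logb 2 (((6:ℝ)/5)^17 * ((5:ℝ)/4)^21 * ((3:ℝ)/2)^38)) :
    0 < 1200 * 65 * x₀ - 1200 ∧ 1200 * 65 * x₀ - 1200 < 0.6 := by
  have h2 : (0:ℝ) < Real.log 2 := Real.log_pos (by norm_num)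
  have e : ((6:ℝ)/5)^17 * ((5:ℝ)/4)^21 * ((3:ℝ)/2)^38 = (3:ℝ)^55 * 5^4 / 2^63 := by
    norm_num
  have hb1 : 84 * Real.log 2 < 53 * Real.log 3 := by
    have := Real.log_lt_log (by positivity) (show (2:ℝ)^84 < 3^53 by norm_num)
    rw [Real.log_pow, Real.log_pow] at this
    push_cast at this; linarith
  have hb2 : 306 * Real.log 3 < 485 * Real.log 2 := by
    have := Real.log_lt_log (by positivity) (show (3:ℝ)^306 < 2^485 by exact_mod_cast (by decide : (3:ℕ)^306 < 2^485))
    rw [Real.log_pow, Real.log_pow] at this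
    push_cast at this; linarith
  have hc1 : 65 * Real.log 2 < 28 * Real.log 5 := by
    have := Real.log_lt_log (by positivity) (show (2:ℝ)^65 < 5^28 by norm_num)
    rw [Real.log_pow, Real.log_pow] at this
    push_cast at this; linarith
  have hc2 : 59 * Real.log 5 < 137 * Real.log 2 := by
    have := Real.log_lt_log (by positivity) (show (5:ℝ)^59 < 2^137 by norm_num)
    rw [Real.log_pow, Real.log_pow] at this
    push_cast at this; linarith
  have hx : x₀ = (1/2174 : ℝ) * ((55 * Real.log 3 + 4 * Real.log 5 - 63 * Real.log 2) / Real.log 2) := by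
    rw [hx₀, e, Real.logb, Real.log_div (by positivity) (by positivity),
      Real.log_mul (by positivity) (by positivity), Real.log_pow, Real.log_pow, Real.log_pow]
    push_cast; ring_nf
  have hE : 1200 * 65 * x₀ - 1200 =
      (78000 * (55 * Real.log 3 + 4 * Real.log 5 - 63 * Real.log 2) - 1200 * 2174 * Real.log 2)
        / (2174 * Real.log 2) := by
    rw [hx]; field_simp; ring
  constructor
  · rw [hE]
    apply div_pos _ (by positivity)
    linarith
  · rw [hE, div_lt_iff₀ (by positivity)]
    linarith
end

section
/- For the pentatonic-optimized Carlos-type scale with (a,b) = (7,11), unit x₀ = (1/991)·log₂(5^3·9^25/512^7), each of the quantities |1200·7·x₀ - 1200·log₂(9/8)|, |1200·14·x₀ - 1200·log₂(5/4)|, |1200·11·x₀ - 1200·log₂(6/5)|, and |1200·25·x₀ - 1200·log₂(3/2)| is less than 7.25 cents. -/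
open Real

lemma aux_logb_lt (y : ℝ) (p q : ℕ) (hq : 0 < q) (hy : 0 < y)
    (h : (2:ℝ)^p < y^q) : (p:ℝ)/q < logb 2 y := by
  rw [div_lt_iff₀ (by exact_mod_cast hq)]
  have h2 : Real.logb 2 ((2:ℝ)^p) < Real.logb 2 (y^q) :=
    Real.logb_lt_logb (by norm_num) (by positivity) h
  simpa [Real.logb_pow, Real.logb_self_eq_one, mul_comm] using h2

lemma aux_lt_logb (y : ℝ) (p q : ℕ) (hq : 0 < q) (hy : 0 < y)
    (h : y^q < (2:ℝ)^p) : logb 2 y < (p:ℝ)/q := by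
  rw [lt_div_iff₀ (by exact_mod_cast hq)]
  have h2 : Real.logb 2 (y^q) < Real.logb 2 ((2:ℝ)^p) :=
    Real.logb_lt_logb (by norm_num) (by positivity) h
  simpa [Real.logb_pow, Real.logb_self_eq_one, mul_comm] using h2

theorem stmt19 (x₀ : ℝ)
    (hx₀ : x₀ = (1/991 : ℝ) * logb 2 ((5:ℝ)^3 * (9:ℝ)^25 / (512:ℝ)^7)) :
    |1200 * 7 * x₀ - 1200 * logb 2 (9/8)| < 7.25
    ∧ |1200 * 14 * x₀ - 1200 * logb 2 (5/4)| < 7.25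
    ∧ |1200 * 11 * x₀ - 1200 * logb 2 (6/5)| < 7.25
    ∧ |1200 * 25 * x₀ - 1200 * logb 2 (3/2)| < 7.25 := by
  set L3 := logb 2 3 with hL3
  set L5 := logb 2 5 with hL5
  have h3l : (1054:ℝ)/665 < L3 := by
    have := aux_logb_lt 3 1054 665 (by norm_num) (by norm_num) (by set_option maxRecDepth 100000 in exact_mod_cast (by decide : (2:ℕ)^1054 < 3^665))
    simpa using this
  have h3u : L3 < (1539:ℝ)/971 := by
    have := aux_lt_logb 3 1539 971 (by norm_num) (by norm_num) (by set_option maxRecDepth 100000 in exact_mod_cast (by decide : (3:ℕ)^971 < 2^1539))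
    simpa using this
  have h5l : (339:ℝ)/146 < L5 := by
    have := aux_logb_lt 5 339 146 (by norm_num) (by norm_num) (by exact_mod_cast (by decide : (2:ℕ)^339 < 5^146))
    simpa using this
  have h5u : L5 < (1493:ℝ)/643 := by
    have := aux_lt_logb 5 1493 643 (by norm_num) (by norm_num) (by set_option maxRecDepth 100000 in exact_mod_cast (by decide : (5:ℕ)^643 < 2^1493))
    simpa using this
  have hlog2 : logb 2 (2:ℝ) = 1 := Real.logb_self_eq_one (by norm_num)
  have e0 : logb 2 ((5:ℝ)^3 * (9:ℝ)^25 / (512:ℝ)^7) = 3*L5 + 50*L3 - 63 := by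
    have h9 : ((9:ℝ))^25 = 3^50 := by norm_num
    have h512 : ((512:ℝ))^7 = 2^63 := by norm_num
    rw [h9, h512, Real.logb_div (by positivity) (by positivity),
      Real.logb_mul (by positivity) (by positivity),
      Real.logb_pow, Real.logb_pow, Real.logb_pow, hlog2, hL3, hL5]
    ring
  have e1 : logb 2 ((9:ℝ)/8) = 2*L3 - 3 := by
    have h9 : (9:ℝ) = 3^2 := by norm_num
    have h8 : (8:ℝ) = 2^3 := by norm_num
    rw [Real.logb_div (by norm_num) (by norm_num), h9, h8,
      Real.logb_pow, Real.logb_pow, hlog2, hL3]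
    ring
  have e2 : logb 2 ((5:ℝ)/4) = L5 - 2 := by
    have h4 : (4:ℝ) = 2^2 := by norm_num
    rw [Real.logb_div (by norm_num) (by norm_num), h4,
      Real.logb_pow, hlog2, hL5]
    ring
  have e3 : logb 2 ((6:ℝ)/5) = 1 + L3 - L5 := by
    have h6 : (6:ℝ) = 2*3 := by norm_num
    rw [Real.logb_div (by norm_num) (by norm_num), h6,
      Real.logb_mul (by norm_num) (by norm_num), hlog2, hL3, hL5]
  have e4 : logb 2 ((3:ℝ)/2) = L3 - 1 := by
    rw [Real.logb_div (by norm_num) (by norm_num), hlog2, hL3]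
  rw [hx₀, e0]
  refine ⟨?_, ?_, ?_, ?_⟩ <;> [rw [e1]; rw [e2]; rw [e3]; rw [e4]] <;>
    · rw [abs_lt]; constructor <;> nlinarith [h3l, h3u, h5l, h5u]
end
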